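/- Let ω ≠ 0, r > 0, λ_0, λ_1 ≥ 0, c > 0, d > 0, let γ > 1 be the unique solution of (ω²/2)·γ·(γ−1) + (λ_0−λ_1)·γ − (r+λ_0) = 0 with γ > 1, and set b := cγ/(d(γ−1)). Define v : (0,∞) → ℝ by v(φ) = (d·b^{1−γ}/γ)·φ^γ for φ ∈ (0,b) and v(φ) = dφ − c for φ ≥ b. Then v is continuously differentiable on (0,∞), is twice continuously differentiable on (0,b), satisfies (ω²/2)·φ²·v''(φ) + (λ_0−λ_1)·φ·v'(φ) − (r+λ_0)·v(φ) = 0 for all φ ∈ (0,b), and fulfils the boundary and smooth-fit conditions v(b) = db − c and v'(b) = d. -/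

import Mathlib

open Set

/-- The explicit value function of the hiring problem (Section 5): smoothness,
the ODE in the continuation region `(0,b)`, value matching and smooth fit at `b`.
Here `l₀, l₁` play the role of the rates `λ₀, λ₁`. -/
theorem stmt_11 (ω r l₀ l₁ c d γ b : ℝ)
    (hω : ω ≠ 0) (hr : 0 < r) (hl₀ : 0 ≤ l₀) (hl₁ : 0 ≤ l₁) (hc : 0 < c) (hd : 0 < d)
    (hγ : 1 < γ)
    (hquad : ω ^ 2 / 2 * γ * (γ - 1) + (l₀ - l₁) * γ - (r + l₀) = 0)
    (hb : b = c * γ / (d * (γ - 1)))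
    (v : ℝ → ℝ)
    (hv : ∀ φ : ℝ, v φ = if φ < b then d * b ^ (1 - γ) / γ * φ ^ γ else d * φ - c) :
    ContDiffOn ℝ 1 v (Ioi 0) ∧
    ContDiffOn ℝ 2 v (Ioo 0 b) ∧
    (∀ φ ∈ Ioo (0 : ℝ) b,
      ω ^ 2 / 2 * φ ^ 2 * deriv (deriv v) φ + (l₀ - l₁) * φ * deriv v φ - (r + l₀) * v φ = 0) ∧
    v b = d * b - c ∧
    deriv v b = d := by
  have hγ0 : (0:ℝ) < γ := by linarith
  have hγ1 : (0:ℝ) < γ - 1 := by linarith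
  have hb0 : 0 < b := by rw [hb]; positivity
  obtain ⟨A, hA⟩ : ∃ A : ℝ, A = d * b ^ (1 - γ) / γ := ⟨_, rfl⟩
  simp only [← hA] at hv
  have hbrel : d * b * (γ - 1) = c * γ := by
    rw [hb]; field_simp
  -- value matching for the power part
  have hbγ : A * b ^ γ = d * b - c := by
    have h1 : b ^ (1 - γ) * b ^ γ = b := by
      rw [← Real.rpow_add hb0]; norm_num
    have h2 : A * b ^ γ = d * b / γ := by
      rw [hA]; field_simp; exact h1
    rw [h2]; field_simp; linarith
  set F : ℝ → ℝ := fun x => A * (γ * x ^ (γ - 1)) with hFdef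
  have hFb : F b = d := by
    have h1 : b ^ (1 - γ) * b ^ (γ - 1) = 1 := by
      rw [← Real.rpow_add hb0]; norm_num
    simp only [hFdef, hA]
    field_simp
    linear_combination h1
  set g : ℝ → ℝ := fun x => A * x ^ γ with hgdef
  have hg : ∀ x : ℝ, HasDerivAt g (F x) x := fun x =>
    (Real.hasDerivAt_rpow_const (Or.inr hγ.le)).const_mul A
  have hvg : ∀ x ≤ b, v x = g x := by
    intro x hx
    rcases lt_or_eq_of_le hx with h | h
    · simp [hv, if_pos h, hgdef]
    · subst h; simp [hv, hgdef, hbγ]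
  have hvh : ∀ x, b ≤ x → v x = d * x - c := fun x hx => by
    simp [hv, not_lt.2 hx]
  set w : ℝ → ℝ := fun x => if x < b then F x else d with hwdef
  have hvw : ∀ x : ℝ, HasDerivAt v (w x) x := by
    intro x
    rcases lt_trichotomy x b with hx | hx | hx
    · have hev : v =ᶠ[nhds x] g := by
        filter_upwards [Iio_mem_nhds hx] with y hy
        exact hvg y (le_of_lt hy)
      simpa [hwdef, if_pos hx] using (hg x).congr_of_eventuallyEq hev
    · subst hx
      have h1 : HasDerivWithinAt v d (Iic x) x := by
        refine ((hFb ▸ hg x).hasDerivWithinAt).congr (fun y hy => hvg y hy) (hvg x le_rfl)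
      have h2 : HasDerivWithinAt v d (Ici x) x := by
        have : HasDerivAt (fun y : ℝ => d * y - c) d x := by
          simpa using ((hasDerivAt_id x).const_mul d).sub_const c
        exact this.hasDerivWithinAt.congr (fun y hy => hvh y hy) (hvh x le_rfl)
      have := (h1.union h2)
      rw [Iic_union_Ici, hasDerivWithinAt_univ] at this
      simpa [hwdef] using this
    · have hev : v =ᶠ[nhds x] fun y => d * y - c := by
        filter_upwards [Ioi_mem_nhds hx] with y hy
        exact hvh y (le_of_lt hy)
      have : HasDerivAt (fun y : ℝ => d * y - c) d x := by
        simpa using ((hasDerivAt_id x).const_mul d).sub_const c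
      simpa [hwdef, not_lt.2 hx.le] using this.congr_of_eventuallyEq hev
  have hderiv : deriv v = w := funext fun x => (hvw x).deriv
  have hFcont : Continuous F := by
    apply continuous_const.mul
    apply continuous_const.mul
    exact continuous_iff_continuousAt.2 fun x =>
      Real.continuousAt_rpow_const x (γ - 1) (Or.inr hγ1.le)
  have hwcont : Continuous w := by
    refine Continuous.if ?_ hFcont continuous_const
    intro a ha
    have : a = b := by
      have : {x : ℝ | x < b} = Iio b := rfl
      rw [this, frontier_Iio] at ha
      simpa using ha
    rw [this, hFb]
  refine ⟨?_, ?_, ?_, by simp [hv, hbγ], by rw [hderiv]; simp [hwdef]⟩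
  · rw [show (1 : WithTop ℕ∞) = 0 + 1 from rfl,
      contDiffOn_succ_iff_deriv_of_isOpen isOpen_Ioi]
    refine ⟨fun x _ => (hvw x).differentiableAt.differentiableWithinAt, by simp, ?_⟩
    rw [hderiv]
    exact contDiffOn_zero.2 hwcont.continuousOn
  · intro x hx
    have hev : v =ᶠ[nhds x] g := by
      filter_upwards [Iio_mem_nhds hx.2] with y hy
      exact hvg y (le_of_lt hy)
    have : ContDiffAt ℝ 2 g x :=
      contDiffAt_const.mul (Real.contDiffAt_rpow_const_of_ne hx.1.ne')
    exact (this.congr_of_eventuallyEq hev).contDiffWithinAt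
  · intro φ hφ
    have hφ0 : (0:ℝ) < φ := hφ.1
    have hd1 : deriv v φ = A * (γ * φ ^ (γ - 1)) := by
      rw [hderiv]; simp [hwdef, if_pos hφ.2, hFdef]
    have hev : deriv v =ᶠ[nhds φ] F := by
      filter_upwards [Iio_mem_nhds hφ.2] with y hy
      rw [hderiv, hwdef]; exact if_pos hy
    have hF' : HasDerivAt F (A * (γ * ((γ - 1) * φ ^ (γ - 1 - 1)))) φ :=
      (((Real.hasDerivAt_rpow_const (Or.inl hφ0.ne')).const_mul γ).const_mul A)
    have hd2 : deriv (deriv v) φ = A * (γ * ((γ - 1) * φ ^ (γ - 1 - 1))) := by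
      rw [hev.deriv_eq]; exact hF'.deriv
    have hvφ : v φ = A * φ ^ γ := by simp [hv, if_pos hφ.2]
    have e1 : φ ^ (γ - 1 - 1) * φ ^ (2:ℕ) = φ ^ γ := by
      rw [← Real.rpow_natCast φ 2, ← Real.rpow_add hφ0]
      norm_num
      congr 1
      ring
    have e2 : φ ^ (γ - 1) * φ = φ ^ γ := by
      calc φ ^ (γ - 1) * φ = φ ^ (γ - 1) * φ ^ (1:ℝ) := by rw [Real.rpow_one]
        _ = φ ^ γ := by rw [← Real.rpow_add hφ0]; congr 1; ring
    rw [hd1, hd2, hvφ]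
    set X := φ ^ (γ - 1 - 1)
    set Y := φ ^ (γ - 1)
    set Z := φ ^ γ
    linear_combination (ω ^ 2 / 2 * A * γ * (γ - 1)) * e1 +
      ((l₀ - l₁) * A * γ) * e2 + A * Z * hquad
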